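/- For every w ∈ S_n there exists a largest projection p ∈ D_n satisfying pw = p; that is, there is a projection p ∈ D_n with pw = p such that every projection p' ∈ D_n with p'w = p' satisfies p' ≤ p. -/

import Mathlib

open scoped BigOperators

variable {A : Type*} [CStarAlgebra A] [PartialOrder A] [StarOrderedRing A]

/-- `Sw S μ = S_{μ_1} ⋯ S_{μ_k}`. -/
def Sw {n : ℕ} (S : Fin n → A) (μ : List (Fin n)) : A := (μ.map S).prod

/-- `Pw S μ = S_μ S_μ*`. -/
def Pw {n : ℕ} (S : Fin n → A) (μ : List (Fin n)) : A := Sw S μ * star (Sw S μ)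

/-- The set 𝒱_n of finite sums ∑ S_α S_β*. -/
def Vset {n : ℕ} (S : Fin n → A) : Set A :=
  {x | ∃ J : Finset (List (Fin n) × List (Fin n)),
      x = ∑ p ∈ J, Sw S p.1 * star (Sw S p.2)}

/-- The Thompson-like group `S_n = 𝒱_n ∩ U(O_n)`; for n = 2 this is Thompson's group V. -/
def Vgrp {n : ℕ} (S : Fin n → A) : Set A := Vset S ∩ (unitary A : Set A)

/-- The diagonal D_n: closed linear span of the projections P_μ. -/
def Ddiag {n : ℕ} (S : Fin n → A) : Set A :=
  ((Submodule.span ℂ (Set.range (Pw S))).topologicalClosure : Submodule ℂ A)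

/-- Projection: self-adjoint idempotent. -/
def IsProjection (p : A) : Prop := IsSelfAdjoint p ∧ p * p = p

/-- Concatenation ν_1 ν_2 ⋯ ν_k. -/
def wcat {n : ℕ} (ν : ℕ → List (Fin n)) (k : ℕ) : List (Fin n) :=
  ((List.range k).map ν).flatten

/-- Modestly scaling endomorphism. -/
def ModestlyScaling {n : ℕ} (S : Fin n → A) (α : A →⋆ₐ[ℂ] A) : Prop :=
  ∀ ν : ℕ → List (Fin n), (∀ k, ν k ≠ []) →
    ∀ p : A, IsProjection p → (∀ k : ℕ, p ≤ α (Pw S (wcat ν (k + 1)))) → p = 0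

/-- Generator x_0 of Thompson's group F inside U(O_2). -/
def x0 (S : Fin 2 → A) : A :=
  S 0 * S 0 * star (S 0) + S 0 * S 1 * star (S 0) * star (S 1) + S 1 * star (S 1) * star (S 1)

/-- Generators x_k of Thompson's group F inside U(O_2). -/
def xgen (S : Fin 2 → A) : ℕ → A
  | 0 => x0 S
  | k + 1 => 1 - S 1 ^ (k + 1) * star (S 1 ^ (k + 1)) + S 1 ^ (k + 1) * x0 S * star (S 1 ^ (k + 1))

/-- Thompson's group F inside U(O_2): the subgroup generated by the x_k
(as a set: the submonoid generated by the x_k and their adjoints = inverses). -/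
def Fgrp (S : Fin 2 → A) : Set A :=
  (Submonoid.closure (Set.range (xgen S) ∪ star '' Set.range (xgen S)) : Set A)

/-- The extra generator for Thompson's group T. -/
def tgen (S : Fin 2 → A) : A :=
  S 1 * S 1 * star (S 0) + S 0 * star (S 0) * star (S 1) + S 1 * S 0 * star (S 1) * star (S 1)

/-- Thompson's group T inside U(O_2). -/
def Tgrp (S : Fin 2 → A) : Set A :=
  (Submonoid.closure ((Set.range (xgen S) ∪ {tgen S}) ∪
      star '' (Set.range (xgen S) ∪ {tgen S})) : Set A)

/-- `IsOneW S w p`: p is the largest projection in D_n with p w = p, i.e. p = 𝟙_w. -/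
def IsOneW {n : ℕ} (S : Fin n → A) (w p : A) : Prop :=
  p ∈ Ddiag S ∧ IsProjection p ∧ p * w = p ∧
    ∀ p' : A, p' ∈ Ddiag S → IsProjection p' → p' * w = p' → p' ≤ p

/-- min(q) = inf { |μ| : P_μ ≤ q } ∈ ℕ ∪ {∞}. -/
noncomputable def minProj {n : ℕ} (S : Fin n → A) (q : A) : ℕ∞ :=
  ⨅ μ ∈ {μ : List (Fin n) | Pw S μ ≤ q}, (μ.length : ℕ∞)

/-- The core UHF subalgebra F_n: closed linear span of {S_μ S_ν* : |μ| = |ν|}. -/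
def UHF {n : ℕ} (S : Fin n → A) : Set A :=
  ((Submodule.span ℂ {x : A | ∃ μ ν : List (Fin n), μ.length = ν.length ∧
      x = Sw S μ * star (Sw S ν)}).topologicalClosure : Submodule ℂ A)

/-- μ ≺ ν : at the first index where μ and ν differ, the letter of μ is smaller. -/
def WordLt {n : ℕ} (μ ν : List (Fin n)) : Prop :=
  ∃ σ : List (Fin n), ∃ a b : Fin n, a < b ∧ (σ ++ [a]) <+: μ ∧ (σ ++ [b]) <+: ν

section CuntzAux

variable {A : Type*} [CStarAlgebra A] [PartialOrder A] [StarOrderedRing A]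
variable {n : ℕ} (S : Fin n → A)

@[simp] lemma Sw_nil : Sw S ([] : List (Fin n)) = 1 := rfl

@[simp] lemma Sw_cons (a : Fin n) (μ : List (Fin n)) : Sw S (a :: μ) = S a * Sw S μ := by
  simp [Sw]

lemma Sw_append (μ ν : List (Fin n)) : Sw S (μ ++ ν) = Sw S μ * Sw S ν := by
  simp [Sw]

section Rel
variable (hiso : ∀ i, star (S i) * S i = 1) (hsum : ∑ i, S i * star (S i) = 1)
include hiso hsum

/-- Orthogonality of the ranges of the generating isometries. -/
lemma orth {i j : Fin n} (hij : i ≠ j) : star (S i) * S j = 0 := by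
  set Pi := S i * star (S i) with hPi
  set Pj := S j * star (S j) with hPj
  have hPpos : ∀ k : Fin n, (0:A) ≤ S k * star (S k) := fun k => by
    simpa using star_mul_self_nonneg (star (S k))
  have hPisq : Pi * Pi = Pi := by
    rw [hPi]
    calc S i * star (S i) * (S i * star (S i)) = S i * (star (S i) * S i) * star (S i) := by noncomm_ring
    _ = S i * star (S i) := by rw [hiso i]; noncomm_ring
  have hPjsq : Pj * Pj = Pj := by
    rw [hPj]
    calc S j * star (S j) * (S j * star (S j)) = S j * (star (S j) * S j) * star (S j) := by noncomm_ring
    _ = S j * star (S j) := by rw [hiso j]; noncomm_ring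
  have hrest : (0:A) ≤ 1 - Pi - Pj := by
    have h1 : ∑ k, S k * star (S k) = Pi + ∑ k ∈ Finset.univ.erase i, S k * star (S k) := by
      rw [hPi, ← Finset.add_sum_erase _ _ (Finset.mem_univ i)]
    have h2 : ∑ k ∈ Finset.univ.erase i, S k * star (S k)
        = Pj + ∑ k ∈ (Finset.univ.erase i).erase j, S k * star (S k) := by
      rw [hPj, ← Finset.add_sum_erase _ _
        (Finset.mem_erase.mpr ⟨hij.symm, Finset.mem_univ j⟩)]
    have : 1 - Pi - Pj = ∑ k ∈ (Finset.univ.erase i).erase j, S k * star (S k) := by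
      rw [← hsum, h1, h2]; noncomm_ring
    rw [this]
    exact Finset.sum_nonneg fun k _ => hPpos k
  have hBstar : star (Pj * Pi) = Pi * Pj := by
    simp [hPi, hPj, star_mul, mul_assoc]
  have hB1 : (0:A) ≤ Pi * Pj * Pi := by
    have : Pi * Pj * Pi = star (Pj * Pi) * (Pj * Pi) := by
      rw [hBstar]
      calc Pi * Pj * Pi = Pi * (Pj * Pj) * Pi := by rw [hPjsq]
      _ = Pi * Pj * (Pj * Pi) := by noncomm_ring
    rw [this]; exact star_mul_self_nonneg _
  have hB2 : (0:A) ≤ -(Pi * Pj * Pi) := by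
    have hc : star Pi * (1 - Pi - Pj) * Pi = -(Pi * Pj * Pi) := by
      have : star Pi = Pi := by simp [hPi, star_mul, mul_assoc]
      rw [this]
      calc Pi * (1 - Pi - Pj) * Pi = Pi * Pi - Pi * Pi * Pi - Pi * Pj * Pi := by noncomm_ring
      _ = -(Pi * Pj * Pi) := by rw [hPisq, hPisq]; noncomm_ring
    rw [← hc]
    exact star_left_conjugate_nonneg hrest Pi
  have hB : Pi * Pj * Pi = 0 := le_antisymm (by simpa using hB2) hB1
  have hPjPi : Pj * Pi = 0 := by
    have : star (Pj * Pi) * (Pj * Pi) = 0 := by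
      rw [hBstar]
      calc Pi * Pj * (Pj * Pi) = Pi * (Pj * Pj) * Pi := by noncomm_ring
      _ = Pi * Pj * Pi := by rw [hPjsq]
      _ = 0 := hB
    exact CStarRing.star_mul_self_eq_zero_iff _ |>.mp this
  have hPiPj : Pi * Pj = 0 := by
    have := congrArg star hPjPi
    rwa [hBstar, star_zero] at this
  calc star (S i) * S j
      = (star (S i) * S i) * (star (S i) * S j) * (star (S j) * S j) := by
        rw [hiso i, hiso j]; noncomm_ring
    _ = star (S i) * (Pi * Pj) * S j := by rw [hPi, hPj]; noncomm_ring
    _ = 0 := by rw [hPiPj]; simp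

/-- The master multiplication rule for words. -/
lemma starSw_mul_Sw (μ ν : List (Fin n)) :
    star (Sw S μ) * Sw S ν =
      if μ <+: ν then Sw S (ν.drop μ.length)
      else if ν <+: μ then star (Sw S (μ.drop ν.length)) else 0 := by
  induction μ generalizing ν with
  | nil => simp
  | cons a μ' ih =>
    cases ν with
    | nil => simp
    | cons b ν' =>
      by_cases hab : a = b
      · subst hab
        have key : star (Sw S (a :: μ')) * Sw S (a :: ν')
            = star (Sw S μ') * Sw S ν' := by
          rw [Sw_cons, Sw_cons, star_mul]
          calc star (Sw S μ') * star (S a) * (S a * Sw S ν')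
              = star (Sw S μ') * (star (S a) * S a) * Sw S ν' := by noncomm_ring
          _ = star (Sw S μ') * Sw S ν' := by rw [hiso a]; noncomm_ring
        rw [key, ih]
        by_cases h1 : μ' <+: ν'
        · rw [if_pos h1, if_pos (List.cons_prefix_cons.mpr ⟨rfl, h1⟩)]
          simp
        · rw [if_neg h1, if_neg (fun h => h1 (List.cons_prefix_cons.mp h).2)]
          by_cases h2 : ν' <+: μ'
          · rw [if_pos h2, if_pos (List.cons_prefix_cons.mpr ⟨rfl, h2⟩)]
            simp
          · rw [if_neg h2, if_neg (fun h => h2 (List.cons_prefix_cons.mp h).2)]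
      · have hz : star (Sw S (a :: μ')) * Sw S (b :: ν') = 0 := by
          rw [Sw_cons, Sw_cons, star_mul]
          calc star (Sw S μ') * star (S a) * (S b * Sw S ν')
              = star (Sw S μ') * (star (S a) * S b) * Sw S ν' := by noncomm_ring
          _ = 0 := by rw [orth S hiso hsum hab]; simp
        rw [hz, if_neg (fun h => hab (List.cons_prefix_cons.mp h).1),
          if_neg (fun h => hab ((List.cons_prefix_cons.mp h).1).symm)]

lemma starSw_Sw_self (μ : List (Fin n)) : star (Sw S μ) * Sw S μ = 1 := by
  rw [starSw_mul_Sw S hiso hsum, if_pos (List.prefix_refl μ)]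
  simp

end Rel

end CuntzAux

section CuntzAux2
set_option linter.unusedSectionVars false

variable {A : Type*} [CStarAlgebra A] [PartialOrder A] [StarOrderedRing A]
variable {n : ℕ} (S : Fin n → A)

@[simp] lemma Pw_star (μ : List (Fin n)) : star (Pw S μ) = Pw S μ := by
  simp [Pw, star_mul]

variable (hiso : ∀ i, star (S i) * S i = 1) (hsum : ∑ i, S i * star (S i) = 1)
include hiso hsum

lemma Pw_mul_Pw (μ ν : List (Fin n)) :
    Pw S μ * Pw S ν = if μ <+: ν then Pw S ν else if ν <+: μ then Pw S μ else 0 := by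
  have key : Pw S μ * Pw S ν = Sw S μ * (star (Sw S μ) * Sw S ν) * star (Sw S ν) := by
    simp [Pw, mul_assoc]
  rw [key, starSw_mul_Sw S hiso hsum]
  by_cases h1 : μ <+: ν
  · rw [if_pos h1, if_pos h1]
    obtain ⟨t, rfl⟩ := h1
    rw [List.drop_left, ← Sw_append, Pw]
  · rw [if_neg h1, if_neg h1]
    by_cases h2 : ν <+: μ
    · rw [if_pos h2, if_pos h2]
      obtain ⟨t, rfl⟩ := h2
      rw [List.drop_left]
      calc Sw S (ν ++ t) * star (Sw S t) * star (Sw S ν)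
          = Sw S (ν ++ t) * (star (Sw S t) * star (Sw S ν)) := by noncomm_ring
        _ = Sw S (ν ++ t) * star (Sw S ν * Sw S t) := by rw [star_mul]
        _ = Pw S (ν ++ t) := by rw [← Sw_append, Pw]
    · rw [if_neg h2, if_neg h2]; simp

lemma Pw_comm (μ ν : List (Fin n)) : Pw S μ * Pw S ν = Pw S ν * Pw S μ := by
  rw [Pw_mul_Pw S hiso hsum, Pw_mul_Pw S hiso hsum]
  by_cases h1 : μ <+: ν
  · by_cases h2 : ν <+: μ
    · have : μ = ν := h1.eq_of_length_le h2.length_le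
      subst this; simp
    · simp [h1, h2]
  · simp [h1]

lemma Pw_orth {μ ν : List (Fin n)} (hlen : μ.length = ν.length) (hne : μ ≠ ν) :
    Pw S μ * Pw S ν = 0 := by
  have h1 : ¬ (μ <+: ν) := fun h => hne (h.eq_of_length_le (le_of_eq hlen.symm))
  have h2 : ¬ (ν <+: μ) := fun h => hne (h.eq_of_length_le (le_of_eq hlen)).symm
  rw [Pw_mul_Pw S hiso hsum, if_neg h1, if_neg h2]

/-- Partition of unity at level `k`. -/
lemma sum_Pw_level (k : ℕ) : ∑ f : Fin k → Fin n, Pw S (List.ofFn f) = 1 := by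
  induction k with
  | zero =>
    rw [Finset.sum_eq_single_of_mem (fun i : Fin 0 => i.elim0) (Finset.mem_univ _)
      (fun g _ hg => absurd (funext fun i => i.elim0) hg)]
    simp [Pw]
  | succ k ih =>
    rw [← (Fin.consEquiv (fun _ : Fin (k+1) => Fin n)).sum_comp (fun f => Pw S (List.ofFn f)),
      Fintype.sum_prod_type]
    have hterm : ∀ (i : Fin n) (g : Fin k → Fin n),
        Pw S (List.ofFn ((Fin.consEquiv (fun _ : Fin (k+1) => Fin n)) (i, g)))
          = S i * Pw S (List.ofFn g) * star (S i) := by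
      intro i g
      have : List.ofFn ((Fin.consEquiv (fun _ : Fin (k+1) => Fin n)) (i, g)) = i :: List.ofFn g := by
        simp [Fin.consEquiv, List.ofFn_succ, Fin.cons]
      rw [this]
      simp [Pw, star_mul, mul_assoc]
    calc ∑ i : Fin n, ∑ g : Fin k → Fin n,
          Pw S (List.ofFn ((Fin.consEquiv (fun _ : Fin (k+1) => Fin n)) (i, g)))
        = ∑ i : Fin n, S i * (∑ g : Fin k → Fin n, Pw S (List.ofFn g)) * star (S i) := by
          refine Finset.sum_congr rfl fun i _ => ?_
          rw [Finset.mul_sum, Finset.sum_mul]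
          exact Finset.sum_congr rfl fun g _ => hterm i g
      _ = 1 := by rw [ih]; simpa using hsum

end CuntzAux2

section CuntzAux3
set_option linter.unusedSectionVars false

variable {A : Type*} [CStarAlgebra A] [PartialOrder A] [StarOrderedRing A]
variable {n : ℕ} (S : Fin n → A)

/-- The averaging map `x ↦ ∑ᵢ Sᵢ* x Sᵢ` as a linear map. -/
noncomputable def PsiL : A →ₗ[ℂ] A where
  toFun x := ∑ i, star (S i) * x * S i
  map_add' x y := by
    simp [mul_add, add_mul, Finset.sum_add_distrib]
  map_smul' c x := by
    simp [Finset.smul_sum, mul_smul_comm, smul_mul_assoc]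

/-- An element is wordlike if it is `0`, `S_m` or `S_m*` for a nonempty word `m`. -/
def IsWordLike (x : A) : Prop :=
  x = 0 ∨ ∃ m : List (Fin n), m ≠ [] ∧ (x = Sw S m ∨ x = star (Sw S m))

lemma IsWordLike.star {x : A} (h : IsWordLike S x) : IsWordLike S (star x) := by
  rcases h with h | ⟨m, hm, h | h⟩
  · left; simp [h]
  · exact Or.inr ⟨m, hm, Or.inr (by rw [h])⟩
  · exact Or.inr ⟨m, hm, Or.inl (by rw [h, star_star])⟩

variable (hiso : ∀ i, star (S i) * S i = 1) (hsum : ∑ i, S i * star (S i) = 1)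
include hiso hsum

lemma PsiL_one : PsiL S (1 : A) = (n : ℂ) • 1 := by
  simp only [PsiL, LinearMap.coe_mk, AddHom.coe_mk]
  calc ∑ i : Fin n, star (S i) * 1 * S i = ∑ i : Fin n, (1:A) := by
        refine Finset.sum_congr rfl fun i _ => ?_
        rw [mul_one]; exact hiso i
    _ = (n : ℂ) • 1 := by
        rw [Nat.cast_smul_eq_nsmul, Finset.sum_const, Finset.card_univ, Fintype.card_fin]

lemma PsiL_Sw (a : Fin n) (m : List (Fin n)) :
    PsiL S (Sw S (a :: m)) = Sw S (m ++ [a]) := by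
  simp only [PsiL, LinearMap.coe_mk, AddHom.coe_mk]
  rw [Finset.sum_eq_single_of_mem a (Finset.mem_univ a)]
  · rw [Sw_cons, Sw_append]
    calc star (S a) * (S a * Sw S m) * S a = (star (S a) * S a) * Sw S m * S a := by
          noncomm_ring
      _ = Sw S m * Sw S [a] := by rw [hiso a]; simp [Sw]
  · intro i _ hia
    rw [Sw_cons]
    calc star (S i) * (S a * Sw S m) * S i = (star (S i) * S a) * Sw S m * S i := by
          noncomm_ring
      _ = 0 := by rw [orth S hiso hsum hia]; simp

lemma PsiL_star (x : A) : PsiL S (star x) = star (PsiL S x) := by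
  simp only [PsiL, LinearMap.coe_mk, AddHom.coe_mk, star_sum, star_mul, star_star]
  exact Finset.sum_congr rfl fun i _ => by noncomm_ring

lemma PsiL_wordlike {x : A} (h : IsWordLike S x) : IsWordLike S (PsiL S x) := by
  rcases h with h | ⟨m, hm, h | h⟩
  · left; rw [h, map_zero]
  · cases m with
    | nil => exact absurd rfl hm
    | cons a m' =>
      right
      exact ⟨m' ++ [a], by simp, Or.inl (by rw [h, PsiL_Sw S hiso hsum])⟩
  · cases m with
    | nil => exact absurd rfl hm
    | cons a m' =>
      right
      refine ⟨m' ++ [a], by simp, Or.inr ?_⟩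
      rw [h, PsiL_star S hiso hsum, PsiL_Sw S hiso hsum]

lemma norm_one_A (hone : (1:A) ≠ 0) : ‖(1:A)‖ = 1 := by
  have h := CStarRing.norm_star_mul_self (x := (1:A))
  rw [star_one, one_mul] at h
  have h0 : ‖(1:A)‖ ≠ 0 := norm_ne_zero_iff.mpr hone
  have := h.symm
  nlinarith [norm_nonneg (1:A), lt_of_le_of_ne (norm_nonneg (1:A)) (Ne.symm h0)]

lemma norm_wordlike (hone : ‖(1:A)‖ = 1) {x : A} (h : IsWordLike S x) : ‖x‖ ≤ 1 := by
  have hsw : ∀ m : List (Fin n), ‖Sw S m‖ ≤ 1 := by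
    intro m
    have h2 := CStarRing.norm_star_mul_self (x := Sw S m)
    rw [starSw_Sw_self S hiso hsum, hone] at h2
    rcases mul_self_eq_one_iff.mp h2.symm with h1 | h1
    · rw [h1]
    · have := norm_nonneg (Sw S m); linarith
  rcases h with h | ⟨m, _, h | h⟩
  · simp [h]
  · rw [h]; exact hsw m
  · rw [h, norm_star]; exact hsw m

/-- Key extraction lemma: the coefficient of 1 in a wordlike combination vanishes. -/
lemma coeff_one_eq_zero (hn : 2 ≤ n) (hone : ‖(1:A)‖ = 1)
    {ι : Type*} (Q : Finset ι) (c : ι → ℂ) (x : ι → A)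
    (hx : ∀ q ∈ Q, IsWordLike S (x q)) (e : ℂ)
    (heq : e • (1:A) + ∑ q ∈ Q, c q • x q = 0) : e = 0 := by
  have key : ∀ k : ℕ, ∃ x' : ι → A, (∀ q ∈ Q, IsWordLike S (x' q)) ∧
      (((n:ℂ)^k * e) • (1:A) + ∑ q ∈ Q, c q • x' q = 0) := by
    intro k
    induction k with
    | zero => exact ⟨x, hx, by simpa using heq⟩
    | succ k ih =>
      obtain ⟨x', hx', heq'⟩ := ih
      refine ⟨fun q => PsiL S (x' q), fun q hq => PsiL_wordlike S hiso hsum (hx' q hq), ?_⟩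
      have := congrArg (PsiL S) heq'
      rw [map_zero, map_add, map_smul, map_sum, PsiL_one S hiso hsum] at this
      have h2 : (((n:ℂ)^k * e) • ((n:ℂ) • (1:A))) = ((n:ℂ)^(k+1) * e) • (1:A) := by
        rw [smul_smul]; ring_nf
      rw [h2] at this
      simpa [map_smul] using this
  have hbound : ∀ k : ℕ, (n:ℝ)^k * ‖e‖ ≤ ∑ q ∈ Q, ‖c q‖ := by
    intro k
    obtain ⟨x', hx', heq'⟩ := key k
    have h1 : ((n:ℂ)^k * e) • (1:A) = - ∑ q ∈ Q, c q • x' q := by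
      linear_combination (norm := noncomm_ring) heq'
    have h2 : ‖((n:ℂ)^k * e) • (1:A)‖ ≤ ∑ q ∈ Q, ‖c q‖ := by
      rw [h1, norm_neg]
      refine le_trans (norm_sum_le _ _) (Finset.sum_le_sum fun q hq => ?_)
      rw [norm_smul]
      exact mul_le_of_le_one_right (norm_nonneg _)
        (norm_wordlike S hiso hsum hone (hx' q hq))
    rw [norm_smul, hone, mul_one] at h2
    calc (n:ℝ)^k * ‖e‖ = ‖(n:ℂ)^k * e‖ := by
          rw [norm_mul, norm_pow]; norm_num
      _ ≤ ∑ q ∈ Q, ‖c q‖ := h2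
  by_contra he
  have hepos : 0 < ‖e‖ := norm_pos_iff.mpr he
  obtain ⟨k, hk⟩ := pow_unbounded_of_one_lt ((∑ q ∈ Q, ‖c q‖) / ‖e‖)
    (by exact_mod_cast Nat.lt_of_lt_of_le one_lt_two hn : (1:ℝ) < n)
  have := hbound k
  rw [div_lt_iff₀ hepos] at hk
  linarith [mul_comm ((∑ q ∈ Q, ‖c q‖) / ‖e‖) ((n:ℝ)^k)]

end CuntzAux3

section CuntzAux4
set_option linter.unusedSectionVars false

variable {A : Type*} [CStarAlgebra A] [PartialOrder A] [StarOrderedRing A]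
variable {n : ℕ} (S : Fin n → A)

variable (hiso : ∀ i, star (S i) * S i = 1) (hsum : ∑ i, S i * star (S i) = 1)
include hiso hsum

/-- Conjugation of a nonempty word by a long word is wordlike. -/
lemma conj_wordlike {m τ : List (Fin n)} (hm : m ≠ []) (hτ : τ ≠ [])
    (hlen : m.length ≤ τ.length) :
    IsWordLike S (star (Sw S τ) * Sw S m * Sw S τ) := by
  rw [starSw_mul_Sw S hiso hsum]
  by_cases h1 : τ <+: m
  · rw [if_pos h1, ← Sw_append]
    exact Or.inr ⟨_, fun h => hτ (List.append_eq_nil_iff.mp h).2, Or.inl rfl⟩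
  · rw [if_neg h1]
    by_cases h2 : m <+: τ
    · rw [if_pos h2, starSw_mul_Sw S hiso hsum]
      by_cases h3 : (τ.drop m.length) <+: τ
      · rw [if_pos h3]
        refine Or.inr ⟨_, ?_, Or.inl rfl⟩
        intro hnil
        rw [List.drop_eq_nil_iff] at hnil
        have hdl : (τ.drop m.length).length = τ.length - m.length := by simp
        rw [hdl] at hnil
        have : m.length = 0 := by omega
        exact hm (List.length_eq_zero_iff.mp this)
      · rw [if_neg h3]
        by_cases h4 : τ <+: (τ.drop m.length)
        · exfalso
          have hl := h4.length_le
          have hdl : (τ.drop m.length).length = τ.length - m.length := by simp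
          have hm1 : 1 ≤ m.length := by
            cases m with
            | nil => exact absurd rfl hm
            | cons a m' => simp
          have hτ1 : 1 ≤ τ.length := le_trans hm1 hlen
          omega
        · rw [if_neg h4]; left; simp
    · rw [if_neg h2]; left; simp

end CuntzAux4

section CuntzAux5
set_option linter.unusedSectionVars false

variable {A : Type*} [CStarAlgebra A] [PartialOrder A] [StarOrderedRing A]
variable {n : ℕ} (S : Fin n → A)

variable (hiso : ∀ i, star (S i) * S i = 1) (hsum : ∑ i, S i * star (S i) = 1)
include hiso hsum

/-- A finite combination of words which is killed by a nonzero word on the right is zero. -/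
lemma sum_words_cancel (hn : 2 ≤ n) (hone : ‖(1:A)‖ = 1)
    {ι : Type*} (Q : Finset ι) (c : ι → ℂ) (word : ι → List (Fin n))
    {γ : List (Fin n)} (hγ : γ ≠ [])
    (h : (∑ q ∈ Q, c q • Sw S (word q)) * Sw S γ = 0) :
    ∑ q ∈ Q, c q • Sw S (word q) = 0 := by
  classical
  have hγ1 : 1 ≤ γ.length := by
    cases γ with
    | nil => exact absurd rfl hγ
    | cons a g => simp
  have htau : ∀ K : ℕ, ∃ τ : List (Fin n), τ ≠ [] ∧ K ≤ τ.length ∧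
      (∑ q ∈ Q, c q • Sw S (word q)) * Sw S τ = 0 := by
    intro K
    induction K with
    | zero => exact ⟨γ, hγ, Nat.zero_le _, h⟩
    | succ K ih =>
      obtain ⟨τ, hτne, hτlen, hτ0⟩ := ih
      refine ⟨γ ++ τ, by simp [hγ], by simp; omega, ?_⟩
      rw [Sw_append, ← mul_assoc, h, zero_mul]
  have hgroup : ∀ δ0 : List (Fin n),
      ∑ q ∈ Q.filter (fun q => word q = δ0), c q = 0 := by
    intro δ0
    obtain ⟨τ, hτne, hτlen, hτ0⟩ :=
      htau (δ0.length + Q.sup (fun q => (word q).length))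
    set g : ι → A := fun q =>
      star (Sw S τ) * ((star (Sw S δ0) * Sw S (word q)) * Sw S τ) with hg
    have hsum0 : ∑ q ∈ Q, c q • g q = 0 := by
      have hc : ∑ q ∈ Q, c q • g q
          = star (Sw S τ) * (star (Sw S δ0) *
              ((∑ q ∈ Q, c q • Sw S (word q)) * Sw S τ)) := by
        simp only [hg, Finset.sum_mul, Finset.mul_sum, smul_mul_assoc, mul_smul_comm,
          mul_assoc]
      rw [hc, hτ0, mul_zero, mul_zero]
    have hsplit : (∑ q ∈ Q.filter (fun q => word q = δ0), c q) • (1:A)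
        + ∑ q ∈ Q.filter (fun q => ¬ word q = δ0), c q • g q = 0 := by
      rw [← hsum0, ← Finset.sum_filter_add_sum_filter_not Q (fun q => word q = δ0)]
      congr 1
      rw [Finset.sum_smul]
      refine Finset.sum_congr rfl fun q hq => ?_
      have hq' : word q = δ0 := (Finset.mem_filter.mp hq).2
      have hgq : g q = 1 := by
        simp only [hg, hq', starSw_Sw_self S hiso hsum, one_mul]
      rw [hgq]
    refine coeff_one_eq_zero S hiso hsum hn hone _ c g ?_ _ hsplit
    intro q hq
    obtain ⟨hqQ, hqne⟩ := Finset.mem_filter.mp hq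
    have hwlen : (word q).length ≤ Q.sup (fun q => (word q).length) :=
      Finset.le_sup (f := fun q => (word q).length) hqQ
    simp only [hg]
    by_cases h1 : δ0 <+: word q
    · have hm : (word q).drop δ0.length ≠ [] := by
        intro hnil
        rw [List.drop_eq_nil_iff] at hnil
        exact hqne (h1.eq_of_length_le hnil).symm
      have key : star (Sw S δ0) * Sw S (word q) = Sw S ((word q).drop δ0.length) := by
        rw [starSw_mul_Sw S hiso hsum, if_pos h1]
      rw [key, ← mul_assoc]
      refine conj_wordlike S hiso hsum hm hτne ?_
      have : ((word q).drop δ0.length).length ≤ (word q).length := by simp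
      omega
    · by_cases h2 : word q <+: δ0
      · have hm : δ0.drop (word q).length ≠ [] := by
          intro hnil
          rw [List.drop_eq_nil_iff] at hnil
          exact hqne (h2.eq_of_length_le hnil)
        have key : star (Sw S δ0) * Sw S (word q)
            = star (Sw S (δ0.drop (word q).length)) := by
          rw [starSw_mul_Sw S hiso hsum, if_neg h1, if_pos h2]
        have key2 : star (Sw S τ) * (star (Sw S (δ0.drop (word q).length)) * Sw S τ)
            = star (star (Sw S τ) * Sw S (δ0.drop (word q).length) * Sw S τ) := by
          simp [star_mul, mul_assoc]
        rw [key, key2]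
        refine IsWordLike.star S (conj_wordlike S hiso hsum hm hτne ?_)
        have : (δ0.drop (word q).length).length ≤ δ0.length := by simp
        omega
      · have key : star (Sw S δ0) * Sw S (word q) = 0 := by
          rw [starSw_mul_Sw S hiso hsum, if_neg h1, if_neg h2]
        rw [key]; left; simp
  calc ∑ q ∈ Q, c q • Sw S (word q)
      = ∑ δ0 ∈ Q.image word, ∑ q ∈ Q.filter (fun q => word q = δ0),
          c q • Sw S (word q) := by
        rw [Finset.sum_fiberwise_of_maps_to (fun q hq => Finset.mem_image_of_mem word hq)]
    _ = 0 := by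
        refine Finset.sum_eq_zero fun δ0 _ => ?_
        calc ∑ q ∈ Q.filter (fun q => word q = δ0), c q • Sw S (word q)
            = ∑ q ∈ Q.filter (fun q => word q = δ0), c q • Sw S δ0 :=
              Finset.sum_congr rfl fun q hq => by
                rw [(Finset.mem_filter.mp hq).2]
          _ = (∑ q ∈ Q.filter (fun q => word q = δ0), c q) • Sw S δ0 := by
              rw [Finset.sum_smul]
          _ = 0 := by rw [hgroup δ0, zero_smul]

end CuntzAux5

section CuntzAux6
set_option linter.unusedSectionVars false

variable {A : Type*} [CStarAlgebra A] [PartialOrder A] [StarOrderedRing A]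
variable {n : ℕ} (S : Fin n → A)

/-- A projection at distance less than 1/2 from a scalar is 0 or 1. -/
lemma proj_near_scalar (hone : ‖(1:A)‖ = 1) {r : A} (hsa : star r = r) (hid : r * r = r)
    (c : ℂ) (hd : ‖r - c • 1‖ < 1/2) : r = 0 ∨ r = 1 := by
  by_contra hcon
  push_neg at hcon
  obtain ⟨hr0, hr1⟩ := hcon
  have hnorm : ∀ s : A, star s = s → s * s = s → s ≠ 0 → ‖s‖ = 1 := by
    intro s hs1 hs2 hs3
    have h := CStarRing.norm_star_mul_self (x := s)
    rw [hs1, hs2] at h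
    have h0 : ‖s‖ ≠ 0 := norm_ne_zero_iff.mpr hs3
    nlinarith [norm_nonneg s, lt_of_le_of_ne (norm_nonneg s) (Ne.symm h0)]
  have hrn : ‖r‖ = 1 := hnorm r hsa hid hr0
  have hsn : ‖1 - r‖ = 1 := by
    refine hnorm (1 - r) (by simp [hsa]) (by simp only [sub_mul, mul_sub, mul_one, one_mul, hid]; abel) ?_
    intro hz
    exact hr1 (sub_eq_zero.mp hz).symm
  have e1 : (r - c • 1) * r = (1 - c) • r := by
    rw [sub_mul, sub_smul, smul_mul_assoc, one_mul, hid, one_smul]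
  have e2 : (r - c • 1) * (1 - r) = -(c • (1 - r)) := by
    rw [sub_mul, mul_sub, mul_sub, hid, mul_one, sub_self, smul_mul_assoc, one_mul,
      zero_sub, neg_sub, smul_sub]
    noncomm_ring
  have h1 : ‖(1:ℂ) - c‖ < 1/2 := by
    have := calc ‖(1 - c) • r‖ = ‖(r - c • 1) * r‖ := by rw [e1]
      _ ≤ ‖r - c • 1‖ * ‖r‖ := norm_mul_le _ _
      _ < 1/2 := by rw [hrn, mul_one]; exact hd
    rwa [norm_smul, hrn, mul_one] at this
  have h2 : ‖c‖ < 1/2 := by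
    have := calc ‖c • (1 - r)‖ = ‖(r - c • 1) * (1 - r)‖ := by rw [e2, norm_neg]
      _ ≤ ‖r - c • 1‖ * ‖1 - r‖ := norm_mul_le _ _
      _ < 1/2 := by rw [hsn, mul_one]; exact hd
    rwa [norm_smul, hsn, mul_one] at this
  have : (1:ℝ) ≤ ‖(1:ℂ) - c‖ + ‖c‖ := by
    calc (1:ℝ) = ‖(1:ℂ)‖ := by simp
      _ = ‖(1 - c) + c‖ := by ring_nf
      _ ≤ ‖(1:ℂ) - c‖ + ‖c‖ := norm_add_le _ _
  linarith

/-- Every element of the diagonal commutes with every `Pw S σ`. -/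
lemma Ddiag_comm (hiso : ∀ i, star (S i) * S i = 1) (hsum : ∑ i, S i * star (S i) = 1)
    {x : A} (hx : x ∈ Ddiag S) (σ : List (Fin n)) : x * Pw S σ = Pw S σ * x := by
  let C : Submodule ℂ A :=
    { carrier := {y | y * Pw S σ = Pw S σ * y}
      add_mem' := fun {a b} ha hb => by
        simp only [Set.mem_setOf_eq] at *
        rw [add_mul, mul_add, ha, hb]
      zero_mem' := by simp
      smul_mem' := fun c a ha => by
        simp only [Set.mem_setOf_eq] at *
        rw [smul_mul_assoc, mul_smul_comm, ha] }
  have hclosed : IsClosed (C : Set A) :=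
    isClosed_eq (continuous_id.mul continuous_const) (continuous_const.mul continuous_id)
  have hspan : Submodule.span ℂ (Set.range (Pw S)) ≤ C := by
    rw [Submodule.span_le]
    rintro _ ⟨μ, rfl⟩
    exact Pw_comm S hiso hsum μ σ
  exact (Submodule.topologicalClosure_minimal _ hspan hclosed) hx

lemma norm_Sw_le (hiso : ∀ i, star (S i) * S i = 1) (hsum : ∑ i, S i * star (S i) = 1)
    (hone : ‖(1:A)‖ = 1) (μ : List (Fin n)) : ‖Sw S μ‖ ≤ 1 := by
  have h2 := CStarRing.norm_star_mul_self (x := Sw S μ)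
  rw [starSw_Sw_self S hiso hsum, hone] at h2
  rcases mul_self_eq_one_iff.mp h2.symm with h1 | h1
  · rw [h1]
  · have := norm_nonneg (Sw S μ); linarith

lemma compress_Pw (hiso : ∀ i, star (S i) * S i = 1) (hsum : ∑ i, S i * star (S i) = 1)
    {μ σ : List (Fin n)} (hlen : μ.length ≤ σ.length) :
    star (Sw S σ) * Pw S μ * Sw S σ = if μ <+: σ then 1 else 0 := by
  by_cases h1 : μ <+: σ
  · rw [if_pos h1]
    obtain ⟨t, rfl⟩ := h1
    rw [Pw, Sw_append, star_mul]
    calc star (Sw S t) * star (Sw S μ) * (Sw S μ * star (Sw S μ)) * (Sw S μ * Sw S t)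
        = star (Sw S t) * ((star (Sw S μ) * Sw S μ) * ((star (Sw S μ) * Sw S μ)
            * Sw S t)) := by noncomm_ring
      _ = star (Sw S t) * Sw S t := by
          rw [starSw_Sw_self S hiso hsum, one_mul, one_mul]
      _ = 1 := starSw_Sw_self S hiso hsum t
  · rw [if_neg h1]
    have hz : star (Sw S μ) * Sw S σ = 0 := by
      rw [starSw_mul_Sw S hiso hsum, if_neg h1, if_neg]
      intro h2
      exact h1 (h2.eq_of_length_le hlen ▸ List.prefix_refl μ)
    rw [Pw]
    calc star (Sw S σ) * (Sw S μ * star (Sw S μ)) * Sw S σ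
        = star (Sw S σ) * Sw S μ * (star (Sw S μ) * Sw S σ) := by noncomm_ring
      _ = 0 := by rw [hz, mul_zero]

lemma fixed_iff (hiso : ∀ i, star (S i) * S i = 1) (hsum : ∑ i, S i * star (S i) = 1)
    {w : A} (hu1 : star w * w = 1) (hu2 : w * star w = 1) (μ : List (Fin n)) :
    Pw S μ * w = Pw S μ ↔ w * Sw S μ = Sw S μ := by
  have e : star (Sw S μ) * Pw S μ = star (Sw S μ) := by
    rw [Pw, ← mul_assoc, starSw_Sw_self S hiso hsum, one_mul]
  constructor
  · intro h
    have h1 : star (Sw S μ) * w = star (Sw S μ) := by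
      calc star (Sw S μ) * w = (star (Sw S μ) * Pw S μ) * w := by rw [e]
        _ = star (Sw S μ) * (Pw S μ * w) := by rw [mul_assoc]
        _ = star (Sw S μ) * Pw S μ := by rw [h]
        _ = star (Sw S μ) := e
    have h2 : star w * Sw S μ = Sw S μ := by
      have h3 := congrArg star h1
      rw [star_mul, star_star] at h3
      simpa using h3
    calc w * Sw S μ = w * (star w * Sw S μ) := by rw [h2]
      _ = (w * star w) * Sw S μ := by rw [mul_assoc]
      _ = Sw S μ := by rw [hu2, one_mul]
  · intro h
    have h1 : star (Sw S μ) * star w = star (Sw S μ) := by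
      have h3 := congrArg star h
      rw [star_mul] at h3
      exact h3
    have h2 : star (Sw S μ) * w = star (Sw S μ) := by
      calc star (Sw S μ) * w = (star (Sw S μ) * star w) * w := by rw [h1]
        _ = star (Sw S μ) * (star w * w) := by rw [mul_assoc]
        _ = star (Sw S μ) := by rw [hu1, mul_one]
    calc Pw S μ * w = Sw S μ * (star (Sw S μ) * w) := by rw [Pw, mul_assoc]
      _ = Pw S μ := by rw [h2, Pw]

lemma exists_ofFn {N : ℕ} {ν : List (Fin n)} (hlen : ν.length = N) :
    ∃ f : Fin N → Fin n, List.ofFn f = ν := by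
  subst hlen
  exact ⟨ν.get, List.ofFn_get ν⟩

/-- Step D: if `w` fixes `S_{ν ++ γ}` with `ν` at least as long as all source words of `w`,
then `w` fixes `S_ν`. -/
lemma stepD (hiso : ∀ i, star (S i) * S i = 1) (hsum : ∑ i, S i * star (S i) = 1)
    (hn : 2 ≤ n) (hone : ‖(1:A)‖ = 1)
    {w : A} (J : Finset (List (Fin n) × List (Fin n)))
    (hJ : w = ∑ p ∈ J, Sw S p.1 * star (Sw S p.2))
    {ν γ : List (Fin n)} (hν : ∀ p ∈ J, p.2.length ≤ ν.length) (hγ : γ ≠ [])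
    (hfix : w * Sw S (ν ++ γ) = Sw S (ν ++ γ)) : w * Sw S ν = Sw S ν := by
  classical
  have hexp : w * Sw S ν = ∑ p ∈ J,
      (if p.2 <+: ν then (1:ℂ) else 0) • Sw S (p.1 ++ ν.drop p.2.length) := by
    rw [hJ, Finset.sum_mul]
    refine Finset.sum_congr rfl fun p hp => ?_
    rw [mul_assoc, starSw_mul_Sw S hiso hsum]
    by_cases h1 : p.2 <+: ν
    · rw [if_pos h1, if_pos h1, one_smul, ← Sw_append]
    · rw [if_neg h1, if_neg h1, zero_smul, if_neg]
      · rw [mul_zero]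
      · intro h2
        exact h1 (h2.eq_of_length_le (hν p hp) ▸ List.prefix_refl ν)
  set c : Option (List (Fin n) × List (Fin n)) → ℂ := fun q =>
    q.elim (-1) (fun p => if p.2 <+: ν then (1:ℂ) else 0) with hc
  set word : Option (List (Fin n) × List (Fin n)) → List (Fin n) := fun q =>
    q.elim ν (fun p => p.1 ++ ν.drop p.2.length) with hword
  have hnone : none ∉ J.image some := by simp
  have hy : ∑ q ∈ insert none (J.image some), c q • Sw S (word q)
      = w * Sw S ν - Sw S ν := by
    rw [Finset.sum_insert hnone, Finset.sum_image (fun a _ b _ h => Option.some_inj.mp h)]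
    rw [hexp]
    simp only [hc, hword, Option.elim_none, Option.elim_some]
    rw [neg_one_smul]
    abel
  have hy0 : (∑ q ∈ insert none (J.image some), c q • Sw S (word q)) * Sw S γ = 0 := by
    rw [hy, sub_mul]
    have h1 : w * Sw S ν * Sw S γ = Sw S ν * Sw S γ := by
      rw [mul_assoc, ← Sw_append, hfix, Sw_append]
    rw [h1, sub_self]
  have h0 := sum_words_cancel S hiso hsum hn hone _ c word hγ hy0
  rw [hy] at h0
  exact sub_eq_zero.mp h0

end CuntzAux6

theorem stmt_7' {A : Type*} [CStarAlgebra A] [PartialOrder A] [StarOrderedRing A]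
    (n : ℕ) (hn : 2 ≤ n) (S : Fin n → A)
    (hiso : ∀ i, star (S i) * S i = 1)
    (hsum : ∑ i, S i * star (S i) = 1)
    (w : A) (hw : w ∈ Vgrp S) :
    ∃ p : A, IsOneW S w p := by
  classical
  obtain ⟨hwV, hwU⟩ := hw
  obtain ⟨J, hJ⟩ := hwV
  obtain ⟨hu1, hu2⟩ := Unitary.mem_iff.mp hwU
  by_cases htriv : (1:A) = 0
  · have hall : ∀ a : A, a = 0 := fun a => by
      calc a = a * 1 := (mul_one a).symm
        _ = a * 0 := by rw [htriv]
        _ = 0 := mul_zero a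
    refine ⟨0, Submodule.zero_mem _, ⟨by simp [IsSelfAdjoint], by simp⟩, by simp, ?_⟩
    intro p' _ _ _
    rw [hall p']
  · have hone : ‖(1:A)‖ = 1 := norm_one_A S hiso hsum htriv
    set N : ℕ := J.sup (fun q => max q.1.length q.2.length) with hN
    have hNbound : ∀ q ∈ J, q.2.length ≤ N := fun q hq =>
      le_trans (le_max_right _ _) (Finset.le_sup (f := fun q => max q.1.length q.2.length) hq)
    set M : Finset (Fin N → Fin n) :=
      Finset.univ.filter (fun f => w * Sw S (List.ofFn f) = Sw S (List.ofFn f)) with hM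
    set p : A := ∑ f ∈ M, Pw S (List.ofFn f) with hp
    have hPwid : ∀ τ : List (Fin n), Pw S τ * Pw S τ = Pw S τ := fun τ => by
      rw [Pw_mul_Pw S hiso hsum, if_pos (List.prefix_refl τ)]
    have hpD : p ∈ Ddiag S := by
      rw [hp]
      apply Submodule.sum_mem
      intro f _
      exact Submodule.le_topologicalClosure _ (Submodule.subset_span ⟨List.ofFn f, rfl⟩)
    have hpsa : star p = p := by
      rw [hp, star_sum]
      exact Finset.sum_congr rfl fun f _ => Pw_star S _
    have hpsq : p * p = p := by
      rw [hp, Finset.sum_mul]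
      refine Finset.sum_congr rfl fun f hf => ?_
      rw [Finset.mul_sum, Finset.sum_eq_single_of_mem f hf]
      · exact hPwid _
      · intro g hg hgf
        refine Pw_orth S hiso hsum (by simp) ?_
        intro hfg
        exact hgf (List.ofFn_inj.mp hfg).symm
    have hpw : p * w = p := by
      rw [hp, Finset.sum_mul]
      refine Finset.sum_congr rfl fun f hf => ?_
      have hfM : w * Sw S (List.ofFn f) = Sw S (List.ofFn f) := by
        rw [hM] at hf
        exact (Finset.mem_filter.mp hf).2
      exact (fixed_iff S hiso hsum hu1 hu2 _).mpr hfM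
    refine ⟨p, hpD, ⟨hpsa, hpsq⟩, hpw, ?_⟩
    intro p' hp'D hp'proj hp'w
    obtain ⟨hp'sa, hp'sq⟩ := hp'proj
    have hp'sa : star p' = p' := hp'sa
    have hcomm : ∀ σ, p' * Pw S σ = Pw S σ * p' := fun σ => Ddiag_comm S hiso hsum hp'D σ
    -- approximate p' by a finite combination
    have hx : ∃ x ∈ Submodule.span ℂ (Set.range (Pw S)), ‖p' - x‖ < 1/2 := by
      have h1 : p' ∈ closure ((Submodule.span ℂ (Set.range (Pw S)) : Submodule ℂ A) :
          Set A) := by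
        rw [← Submodule.topologicalClosure_coe]
        exact hp'D
      rw [Metric.mem_closure_iff] at h1
      obtain ⟨x, hx1, hx2⟩ := h1 (1/2) (by norm_num)
      exact ⟨x, hx1, by rw [← dist_eq_norm]; exact hx2⟩
    obtain ⟨x, hxspan, hxnear⟩ := hx
    rw [Submodule.mem_span_set'] at hxspan
    obtain ⟨k, coef, v, hxrep⟩ := hxspan
    choose μs hμs using fun i : Fin k => (v i).2
    set L : ℕ := (Finset.univ : Finset (Fin k)).sup (fun i => (μs i).length) with hL
    set L' : ℕ := max L N + 1 with hL'
    have hL'N : N < L' := lt_of_le_of_lt (le_max_right L N) (Nat.lt_succ_self _)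
    have hL'L : L ≤ L' := le_trans (le_max_left L N) (Nat.le_succ _)
    have key : p' * p = p' := by
      have hdecomp : p' = ∑ g : Fin L' → Fin n, Pw S (List.ofFn g) * p' := by
        rw [← Finset.sum_mul, sum_Pw_level S hiso hsum L', one_mul]
      have hterm : ∀ g : Fin L' → Fin n,
          Pw S (List.ofFn g) * p' * p = Pw S (List.ofFn g) * p' := by
        intro g
        set σ : List (Fin n) := List.ofFn g with hσ
        have hσlen : σ.length = L' := by simp [hσ, hL']
        set r : A := star (Sw S σ) * p' * Sw S σ with hr
        have hrsa : star r = r := by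
          rw [hr]
          simp only [star_mul, star_star, hp'sa]
          rw [mul_assoc]
        have hPp' : Pw S σ * p' = Sw S σ * r * star (Sw S σ) := by
          have h1 : Pw S σ * p' = Pw S σ * p' * Pw S σ := by
            calc Pw S σ * p' = (Pw S σ * Pw S σ) * p' := by rw [hPwid]
              _ = Pw S σ * (Pw S σ * p') := by rw [mul_assoc]
              _ = Pw S σ * (p' * Pw S σ) := by rw [hcomm σ]
              _ = Pw S σ * p' * Pw S σ := by rw [mul_assoc]
          rw [h1, hr, Pw]
          noncomm_ring
        have hrsq : r * r = r := by
          have h2 : r * r = star (Sw S σ) * (p' * Pw S σ * p') * Sw S σ := by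
            rw [hr, Pw]; noncomm_ring
          rw [h2, hcomm σ, mul_assoc (Pw S σ) p' p', hp'sq]
          have h3 : star (Sw S σ) * (Pw S σ * p') * Sw S σ
              = (star (Sw S σ) * Sw S σ) * (star (Sw S σ) * p' * Sw S σ) := by
            rw [Pw]; noncomm_ring
          rw [h3, starSw_Sw_self S hiso hsum, one_mul, hr]
        set cσ : ℂ := ∑ i, (if μs i <+: σ then coef i else 0) with hcσ
        have hscalar : star (Sw S σ) * x * Sw S σ = cσ • (1:A) := by
          rw [← hxrep]
          calc star (Sw S σ) * (∑ i, coef i • ((v i : A))) * Sw S σ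
              = ∑ i, coef i • (star (Sw S σ) * Pw S (μs i) * Sw S σ) := by
                rw [Finset.mul_sum, Finset.sum_mul]
                refine Finset.sum_congr rfl fun i _ => ?_
                rw [← hμs i]
                simp only [mul_smul_comm, smul_mul_assoc]
            _ = ∑ i, coef i • (if μs i <+: σ then (1:A) else 0) := by
                refine Finset.sum_congr rfl fun i _ => ?_
                rw [compress_Pw S hiso hsum]
                have h4 : (μs i).length ≤ L :=
                  Finset.le_sup (f := fun i => (μs i).length) (Finset.mem_univ i)
                rw [hσlen]; omega
            _ = ∑ i, (if μs i <+: σ then coef i else 0) • (1:A) := by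
                refine Finset.sum_congr rfl fun i _ => ?_
                split_ifs with h5
                · rfl
                · simp
            _ = cσ • (1:A) := by rw [hcσ, Finset.sum_smul]
        have hrdich : r = 0 ∨ r = 1 := by
          refine proj_near_scalar hone hrsa hrsq cσ ?_
          have hsub : r - cσ • 1 = star (Sw S σ) * (p' - x) * Sw S σ := by
            rw [hr, ← hscalar]
            noncomm_ring
          rw [hsub]
          have ha := norm_mul_le (star (Sw S σ) * (p' - x)) (Sw S σ)
          have hb := norm_mul_le (star (Sw S σ)) (p' - x)
          have hc := norm_Sw_le S hiso hsum hone σ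
          have hd : ‖star (Sw S σ)‖ ≤ 1 := by rw [norm_star]; exact hc
          have hnn1 : (0:ℝ) ≤ ‖p' - x‖ := norm_nonneg _
          have hnn2 : (0:ℝ) ≤ ‖star (Sw S σ) * (p' - x)‖ := norm_nonneg _
          have hnn3 : (0:ℝ) ≤ ‖Sw S σ‖ := norm_nonneg _
          nlinarith
        rcases hrdich with h0 | h1
        · have hz : Pw S σ * p' = 0 := by rw [hPp', h0, mul_zero, zero_mul]
          rw [hz, zero_mul]
        · have hone' : Pw S σ * p' = Pw S σ := by rw [hPp', h1, mul_one, Pw]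
          have hfixσ : Pw S σ * w = Pw S σ := by
            calc Pw S σ * w = (Pw S σ * p') * w := by rw [hone']
              _ = Pw S σ * (p' * w) := by rw [mul_assoc]
              _ = Pw S σ * p' := by rw [hp'w]
              _ = Pw S σ := hone'
          have hwσ : w * Sw S σ = Sw S σ := (fixed_iff S hiso hsum hu1 hu2 σ).mp hfixσ
          set ν : List (Fin n) := σ.take N with hν
          set γ : List (Fin n) := σ.drop N with hγdef
          have hσνγ : ν ++ γ = σ := List.take_append_drop N σ
          have hνlen : ν.length = N := by
            rw [hν, List.length_take, hσlen]
            omega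
          have hγne : γ ≠ [] := by
            intro h6
            have := congrArg List.length h6
            rw [hγdef, List.length_drop, hσlen] at this
            simp at this
            omega
          have hwnν : w * Sw S ν = Sw S ν := by
            refine stepD S hiso hsum hn hone J hJ ?_ hγne ?_
            · intro q hq
              rw [hνlen]
              exact hNbound q hq
            · rw [hσνγ]
              exact hwσ
          obtain ⟨f0, hf0⟩ := exists_ofFn hνlen
          have hf0M : f0 ∈ M := by
            rw [hM, Finset.mem_filter]
            exact ⟨Finset.mem_univ _, by rw [hf0]; exact hwnν⟩
          have hPσp : Pw S σ * p = Pw S σ := by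
            rw [hp, Finset.mul_sum, Finset.sum_eq_single_of_mem f0 hf0M]
            · rw [Pw_mul_Pw S hiso hsum, if_neg, if_pos]
              · rw [hf0, hν]
                exact List.take_prefix N σ
              · intro h7
                have := h7.length_le
                rw [hσlen] at this
                simp at this
                omega
            · intro g hg hgf0
              rw [Pw_mul_Pw S hiso hsum, if_neg, if_neg]
              · intro h8
                have h9 : List.ofFn g = σ.take ((List.ofFn g).length) :=
                  List.prefix_iff_eq_take.mp h8
                rw [List.length_ofFn] at h9
                apply hgf0
                apply List.ofFn_inj.mp
                rw [h9, hf0, hν]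
              · intro h7
                have := h7.length_le
                rw [hσlen] at this
                simp at this
                omega
          calc Pw S σ * p' * p = Pw S σ * p := by rw [hone']
            _ = Pw S σ := hPσp
            _ = Pw S σ * p' := hone'.symm
      calc p' * p = (∑ g : Fin L' → Fin n, Pw S (List.ofFn g) * p') * p := by
            rw [← hdecomp]
        _ = ∑ g : Fin L' → Fin n, Pw S (List.ofFn g) * p' * p := by rw [Finset.sum_mul]
        _ = ∑ g : Fin L' → Fin n, Pw S (List.ofFn g) * p' :=
            Finset.sum_congr rfl fun g _ => hterm g
        _ = p' := hdecomp.symm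
    have hpp' : p * p' = p' := by
      have h10 := congrArg star key
      rw [star_mul, hpsa, hp'sa] at h10
      exact h10
    have hdiff : (p - p') * (p - p') = p - p' := by
      rw [sub_mul, mul_sub, mul_sub, hpsq, key, hpp', hp'sq]
      abel
    have hsd : star (p - p') = p - p' := by rw [star_sub, hpsa, hp'sa]
    have hfin : 0 ≤ p - p' := by
      have h11 : p - p' = star (p - p') * (p - p') := by rw [hsd, hdiff]
      rw [h11]
      exact star_mul_self_nonneg _
    exact sub_nonneg.mp hfin

theorem stmt_7 {A : Type*} [CStarAlgebra A] [PartialOrder A] [StarOrderedRing A]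
    (n : ℕ) (hn : 2 ≤ n) (S : Fin n → A)
    (hiso : ∀ i, star (S i) * S i = 1)
    (hsum : ∑ i, S i * star (S i) = 1)
    (hgen : (StarAlgebra.adjoin ℂ (Set.range S)).topologicalClosure = ⊤)
    (w : A) (hw : w ∈ Vgrp S) :
    ∃ p : A, IsOneW S w p :=
  stmt_7' n hn S hiso hsum w hw
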